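/- Let M be a self-adjoint matrix in ℝ^{n×n}, let V_1, V_2 be subspaces of ℝ^n with orthogonal projectors Π_1, Π_2, and let λ_1, λ_2 ≥ 0. If √(λ_1 λ_2) ≥ ‖Π_1 M Π_2‖, then Π_1 M Π_2 + Π_2 M Π_1 ⪯ λ_1 Π_1 + λ_2 Π_2. -/

import Mathlib

open Matrix

/-- The `ℓ²`-operator norm of a real square matrix. -/
noncomputable def opNorm {m : Type*} [Fintype m] [DecidableEq m]
    (M : Matrix m m ℝ) : ℝ :=
  ‖Matrix.toEuclideanCLM (𝕜 := ℝ) M‖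

lemma dot_mulVec_le {n : ℕ} (A : Matrix (Fin n) (Fin n) ℝ) (u v : Fin n → ℝ) :
    u ⬝ᵥ A *ᵥ v ≤ opNorm A *
      (‖(WithLp.equiv 2 (Fin n → ℝ)).symm u‖ * ‖(WithLp.equiv 2 (Fin n → ℝ)).symm v‖) := by
  set u' := (WithLp.equiv 2 (Fin n → ℝ)).symm u
  set v' := (WithLp.equiv 2 (Fin n → ℝ)).symm v
  have heq : u ⬝ᵥ A *ᵥ v = inner ℝ u' (toEuclideanCLM (𝕜 := ℝ) A v') := by
    rw [show inner ℝ u' (toEuclideanCLM (𝕜 := ℝ) A v') = (A *ᵥ v) ⬝ᵥ star u from rfl, dotProduct_comm]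
    simp
  rw [heq]
  calc inner ℝ u' (toEuclideanCLM (𝕜 := ℝ) A v')
      ≤ ‖u'‖ * ‖toEuclideanCLM (𝕜 := ℝ) A v'‖ := real_inner_le_norm _ _
    _ ≤ ‖u'‖ * (opNorm A * ‖v'‖) := by
        gcongr
        exact (toEuclideanCLM (𝕜 := ℝ) A).le_opNorm v'
    _ = opNorm A * (‖u'‖ * ‖v'‖) := by ring

lemma dot_self_eq {n : ℕ} (u : Fin n → ℝ) :
    u ⬝ᵥ u = ‖(WithLp.equiv 2 (Fin n → ℝ)).symm u‖ ^ 2 := by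
  rw [← real_inner_self_eq_norm_sq]
  show u ⬝ᵥ u = u ⬝ᵥ star u
  simp

/-- Lemma 2.11: if `√(λ₁ λ₂) ≥ ‖Π₁ M Π₂‖` then
`Π₁ M Π₂ + Π₂ M Π₁ ⪯ λ₁ Π₁ + λ₂ Π₂`. -/
theorem cross_term_bound {n : ℕ} (M Pi1 Pi2 : Matrix (Fin n) (Fin n) ℝ)
    (hM : M.IsHermitian)
    (h1sym : Pi1.IsHermitian) (h1idem : Pi1 * Pi1 = Pi1)
    (h2sym : Pi2.IsHermitian) (h2idem : Pi2 * Pi2 = Pi2)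
    (lam1 lam2 : ℝ) (hlam1 : 0 ≤ lam1) (hlam2 : 0 ≤ lam2)
    (h : opNorm (Pi1 * M * Pi2) ≤ Real.sqrt (lam1 * lam2)) :
    (lam1 • Pi1 + lam2 • Pi2 - (Pi1 * M * Pi2 + Pi2 * M * Pi1)).PosSemidef := by
  have h1t : Pi1ᵀ = Pi1 := by
    rw [← conjTranspose_eq_transpose_of_trivial, h1sym.eq]
  have h2t : Pi2ᵀ = Pi2 := by
    rw [← conjTranspose_eq_transpose_of_trivial, h2sym.eq]
  have hMt : Mᵀ = M := by
    rw [← conjTranspose_eq_transpose_of_trivial, hM.eq]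
  have hA : (Pi1 * M * Pi2)ᴴ = Pi2 * M * Pi1 := by
    simp [conjTranspose_mul, h1t, h2t, hMt, conjTranspose_eq_transpose_of_trivial,
      Matrix.mul_assoc]
  refine Matrix.PosSemidef.of_dotProduct_mulVec_nonneg ?_ ?_
  · unfold Matrix.IsHermitian
    rw [conjTranspose_sub, conjTranspose_add, conjTranspose_add, conjTranspose_smul,
      conjTranspose_smul, h1sym.eq, h2sym.eq, hA, ← hA, conjTranspose_conjTranspose, hA]
    simp only [star_trivial]
    rw [add_comm (Pi2 * M * Pi1)]
  · intro x
    simp only [star_trivial, sub_mulVec, add_mulVec, smul_mulVec,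
      dotProduct_sub, dotProduct_add, dotProduct_smul, smul_eq_mul]
    set A := Pi1 * M * Pi2 with hAdef
    set u := Pi1 *ᵥ x with hudef
    set v := Pi2 *ᵥ x with hvdef
    have key : ∀ (P : Matrix (Fin n) (Fin n) ℝ), Pᵀ = P → P * P = P →
        x ⬝ᵥ P *ᵥ x = (P *ᵥ x) ⬝ᵥ (P *ᵥ x) := by
      intro P hPt hPi
      conv_lhs => rw [← hPi, ← Matrix.mulVec_mulVec, dotProduct_mulVec, ← mulVec_transpose, hPt]
    have hu : x ⬝ᵥ Pi1 *ᵥ x = u ⬝ᵥ u := key Pi1 h1t h1idem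
    have hv : x ⬝ᵥ Pi2 *ᵥ x = v ⬝ᵥ v := key Pi2 h2t h2idem
    have e1 : A = Pi1 * A := by
      rw [hAdef]
      conv_rhs => rw [← Matrix.mul_assoc, ← Matrix.mul_assoc, h1idem]
    have e2 : A = A * Pi2 := by
      rw [hAdef, Matrix.mul_assoc (Pi1 * M) Pi2 Pi2, h2idem]
    have hcross1 : x ⬝ᵥ A *ᵥ x = u ⬝ᵥ A *ᵥ v := by
      conv_lhs => rw [e1, ← Matrix.mulVec_mulVec, dotProduct_mulVec, ← mulVec_transpose, h1t,
        e2, ← Matrix.mulVec_mulVec]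
    have hcross2 : x ⬝ᵥ (Pi2 * M * Pi1) *ᵥ x = u ⬝ᵥ A *ᵥ v := by
      rw [← hA, conjTranspose_eq_transpose_of_trivial, mulVec_transpose, dotProduct_comm,
        ← dotProduct_mulVec, hcross1]
    rw [hu, hv, hcross1, hcross2, dot_self_eq u, dot_self_eq v]
    set a := ‖(WithLp.equiv 2 (Fin n → ℝ)).symm u‖ with hadef
    set b := ‖(WithLp.equiv 2 (Fin n → ℝ)).symm v‖ with hbdef
    have ha0 : 0 ≤ a := norm_nonneg _
    have hb0 : 0 ≤ b := norm_nonneg _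
    have hbound : u ⬝ᵥ A *ᵥ v ≤ Real.sqrt lam1 * Real.sqrt lam2 * (a * b) := by
      calc u ⬝ᵥ A *ᵥ v ≤ opNorm A * (a * b) := dot_mulVec_le A u v
        _ ≤ Real.sqrt (lam1 * lam2) * (a * b) := by
            apply mul_le_mul_of_nonneg_right h (by positivity)
        _ = Real.sqrt lam1 * Real.sqrt lam2 * (a * b) := by
            rw [Real.sqrt_mul hlam1]
    have h1 : Real.sqrt lam1 ^ 2 = lam1 := Real.sq_sqrt hlam1
    have h2 : Real.sqrt lam2 ^ 2 = lam2 := Real.sq_sqrt hlam2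
    nlinarith [sq_nonneg (Real.sqrt lam1 * a - Real.sqrt lam2 * b)]
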